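/- There exist C > 0 and h₀ > 0 such that for every h ∈ (0,h₀), every E₀ ∈ ℝ with |E₀ − (1+h)| ≤ e^{−1/(10h)}, and every x ∈ [3.5, R+1]: |−h² v_±''(x) + (V(x) − E₀)v_±(x)| ≤ C h², and |W(v₊, v₋)(x) + 2i| ≤ C h. -/

import Mathlib

open MeasureTheory Set Real

noncomputable section

/-- The phase `Φ(x) = ∫_{4-E₀}^x √(E₀ - V(y)) dy`. -/
def wkbPhase (V : ℝ → ℝ) (E₀ : ℝ) (x : ℝ) : ℝ :=
  ∫ y in (4 - E₀)..x, Real.sqrt (E₀ - V y)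

/-- The WKB solution `v₊(x) = (E₀ - V(x))^{-1/4} e^{iΦ(x)/h}`. -/
def wkbPlus (V : ℝ → ℝ) (h E₀ : ℝ) (x : ℝ) : ℂ :=
  (((E₀ - V x) ^ (-(1 / 4 : ℝ)) : ℝ) : ℂ) * Complex.exp (Complex.I * (wkbPhase V E₀ x) / h)

/-- The WKB solution `v₋(x) = (E₀ - V(x))^{-1/4} e^{-iΦ(x)/h}`. -/
def wkbMinus (V : ℝ → ℝ) (h E₀ : ℝ) (x : ℝ) : ℂ :=
  (((E₀ - V x) ^ (-(1 / 4 : ℝ)) : ℝ) : ℂ) * Complex.exp (-Complex.I * (wkbPhase V E₀ x) / h)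

def wkbV (V : ℝ → ℝ) (h E₀ : ℝ) (σ : ℂ) (x : ℝ) : ℂ :=
  (((E₀ - V x) ^ (-(1 / 4 : ℝ)) : ℝ) : ℂ) * Complex.exp (σ * (wkbPhase V E₀ x) / h)

def wkbD1 (V : ℝ → ℝ) (h E₀ : ℝ) (σ : ℂ) (y : ℝ) : ℂ :=
  ((-(deriv V y) * (-(1/4)) * (E₀ - V y) ^ ((-(1/4):ℝ) - 1) : ℝ) : ℂ)
      * Complex.exp (σ * (wkbPhase V E₀ y) / h)
  + (((E₀ - V y) ^ (-(1/4):ℝ) : ℝ) : ℂ) * (σ * (Real.sqrt (E₀ - V y)) / h)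
      * Complex.exp (σ * (wkbPhase V E₀ y) / h)

def wkbA2 (V : ℝ → ℝ) (E₀ : ℝ) (y : ℝ) : ℝ :=
  -(deriv (deriv V) y) * (-(1/4)) * (E₀ - V y) ^ ((-(1/4):ℝ) - 1)
  + -(deriv V y) * (-(1/4)) * (-(deriv V y) * ((-(1/4):ℝ) - 1) * (E₀ - V y) ^ ((-(1/4):ℝ) - 1 - 1))

lemma rpow_cancel {q w : ℝ} (hq : 0 < q) :
    2 * (-w * (-(1/4)) * q ^ ((-(1/4):ℝ) - 1)) * Real.sqrt q
      + q ^ (-(1/4):ℝ) * (-w / (2 * Real.sqrt q)) = 0 := by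
  have h1 : q ^ ((-(1/4):ℝ) - 1) * q ^ ((1/2:ℝ)) = q ^ (-(3/4):ℝ) := by
    rw [← Real.rpow_add hq]; norm_num
  have h2 : q ^ (-(1/4):ℝ) = q ^ (-(3/4):ℝ) * q ^ ((1/2:ℝ)) := by
    rw [← Real.rpow_add hq]; norm_num
  rw [Real.sqrt_eq_rpow, h2]
  set A := q ^ ((-(1/4):ℝ) - 1) with hA
  set B := q ^ ((1/2:ℝ)) with hB
  set C := q ^ (-(3/4):ℝ) with hC
  have hB0 : B ≠ 0 := by rw [hB]; positivity
  clear_value A B C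
  have key : w * A * B ^ 2 * 2 - w * B * C * 2 = 0 := by linear_combination (w * B * 2) * h1
  field_simp
  linear_combination (4 * w) * h1

lemma a_sq_sqrt {q : ℝ} (hq : 0 < q) :
    q ^ (-(1/4):ℝ) * q ^ (-(1/4):ℝ) * Real.sqrt q = 1 := by
  rw [Real.sqrt_eq_rpow, ← Real.rpow_add hq, ← Real.rpow_add hq]
  norm_num

lemma hasDerivAt_wkbPhase (V : ℝ → ℝ) (hV : Continuous V) (E₀ x : ℝ) :
    HasDerivAt (wkbPhase V E₀) (Real.sqrt (E₀ - V x)) x := by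
  have hc : Continuous fun y => Real.sqrt (E₀ - V y) := (continuous_const.sub hV).sqrt
  exact intervalIntegral.integral_hasDerivAt_right (hc.intervalIntegrable _ _)
    (hc.stronglyMeasurable.stronglyMeasurableAtFilter) hc.continuousAt

lemma hasDerivAt_wkbV (V : ℝ → ℝ) (hV : ContDiff ℝ (⊤ : ℕ∞) V) {h E₀ : ℝ}
    (σ : ℂ) {x : ℝ} (hx : V x < E₀) :
    HasDerivAt (wkbV V h E₀ σ) (wkbD1 V h E₀ σ x) x := by
  have hVd : HasDerivAt V (deriv V x) x :=
    ((contDiff_infty_iff_deriv.mp hV).1 x).hasDerivAt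
  have hp : HasDerivAt (fun y => E₀ - V y) (-(deriv V x)) x := (hVd.const_sub E₀)
  have hpx : E₀ - V x ≠ 0 := by linarith
  have ha : HasDerivAt (fun y => (E₀ - V y) ^ (-(1/4):ℝ))
      (-(deriv V x) * (-(1/4)) * (E₀ - V x) ^ ((-(1/4):ℝ) - 1)) x :=
    hp.rpow_const (Or.inl hpx)
  have hΦ : HasDerivAt (wkbPhase V E₀) (Real.sqrt (E₀ - V x)) x :=
    hasDerivAt_wkbPhase V hV.continuous E₀ x
  have hE : HasDerivAt (fun y => Complex.exp (σ * (wkbPhase V E₀ y) / h))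
      (Complex.exp (σ * (wkbPhase V E₀ x) / h) * (σ * (Real.sqrt (E₀ - V x)) / h)) x :=
    (((hΦ.ofReal_comp).const_mul σ).div_const _).cexp
  have := (ha.ofReal_comp).mul hE
  refine this.congr_deriv ?_
  unfold wkbD1
  ring

lemma hasDerivAt_wkbD1 (V : ℝ → ℝ) (hV : ContDiff ℝ (⊤ : ℕ∞) V) {h E₀ : ℝ} (hh : h ≠ 0)
    (σ : ℂ) (hσ : σ * σ = -1) {x : ℝ} (hx : V x < E₀) :
    ∃ d : ℂ, HasDerivAt (wkbD1 V h E₀ σ) d x ∧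
      -(h:ℂ)^2 * d + ((V x - E₀ : ℝ):ℂ) * wkbV V h E₀ σ x
        = -(h:ℂ)^2 * ((wkbA2 V E₀ x : ℝ):ℂ) * Complex.exp (σ * (wkbPhase V E₀ x) / h) := by
  have hD := contDiff_infty_iff_deriv.mp hV
  have hVd : HasDerivAt V (deriv V x) x := (hD.1 x).hasDerivAt
  have hw : HasDerivAt (deriv V) (deriv (deriv V) x) x :=
    ((contDiff_infty_iff_deriv.mp hD.2).1 x).hasDerivAt
  have hp : HasDerivAt (fun y => E₀ - V y) (-(deriv V x)) x := (hVd.const_sub E₀)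
  have hP : (0:ℝ) < E₀ - V x := by linarith
  have hpx : E₀ - V x ≠ 0 := ne_of_gt hP
  have ha : HasDerivAt (fun y => (E₀ - V y) ^ (-(1/4):ℝ))
      (-(deriv V x) * (-(1/4)) * (E₀ - V x) ^ ((-(1/4):ℝ) - 1)) x :=
    hp.rpow_const (Or.inl hpx)
  have hΦ : HasDerivAt (wkbPhase V E₀) (Real.sqrt (E₀ - V x)) x :=
    hasDerivAt_wkbPhase V hV.continuous E₀ x
  have hE : HasDerivAt (fun y => Complex.exp (σ * (wkbPhase V E₀ y) / h))
      (Complex.exp (σ * (wkbPhase V E₀ x) / h) * (σ * (Real.sqrt (E₀ - V x)) / h)) x :=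
    (((hΦ.ofReal_comp).const_mul σ).div_const _).cexp
  have ha1 : HasDerivAt (fun y => -(deriv V y) * (-(1/4)) * (E₀ - V y) ^ ((-(1/4):ℝ) - 1))
      ((-(deriv (deriv V) x) * (-(1/4))) * (E₀ - V x) ^ ((-(1/4):ℝ) - 1)
        + (-(deriv V x) * (-(1/4))) * (-(deriv V x) * ((-(1/4):ℝ) - 1)
            * (E₀ - V x) ^ ((-(1/4):ℝ) - 1 - 1))) x :=
    (hw.neg.mul_const (-(1/4))).mul (hp.rpow_const (Or.inl hpx))
  have hs : HasDerivAt (fun y => Real.sqrt (E₀ - V y))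
      (-(deriv V x) / (2 * Real.sqrt (E₀ - V x))) x := hp.sqrt hpx
  have hmid : HasDerivAt
      (fun y => (((E₀ - V y) ^ (-(1/4):ℝ) : ℝ) : ℂ) * (σ * (Real.sqrt (E₀ - V y)) / h))
      ((((-(deriv V x) * (-(1/4)) * (E₀ - V x) ^ ((-(1/4):ℝ) - 1) : ℝ)) : ℂ)
          * (σ * (Real.sqrt (E₀ - V x)) / h)
        + (((E₀ - V x) ^ (-(1/4):ℝ) : ℝ) : ℂ)
          * (σ * ((-(deriv V x) / (2 * Real.sqrt (E₀ - V x)) : ℝ)) / h)) x :=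
    (ha.ofReal_comp).mul (((hs.ofReal_comp).const_mul σ).div_const _)
  have hd := ((ha1.ofReal_comp).mul hE).add (hmid.mul hE)
  refine ⟨_, hd, ?_⟩
  have hP1 : (E₀ - V x) ^ (-(1/4):ℝ) = (E₀ - V x) ^ ((-(1/4):ℝ) - 1) * (E₀ - V x) := by
    rw [show (E₀ - V x) ^ ((-(1/4):ℝ) - 1) * (E₀ - V x)
        = (E₀ - V x) ^ ((-(1/4):ℝ) - 1) * (E₀ - V x) ^ (1:ℝ) by rw [Real.rpow_one],
      ← Real.rpow_add hP]; norm_num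
  have hP2 : (E₀ - V x) ^ ((-(1/4):ℝ) - 1) = (E₀ - V x) ^ ((-(1/4):ℝ) - 1 - 1) * (E₀ - V x) := by
    rw [show (E₀ - V x) ^ ((-(1/4):ℝ) - 1 - 1) * (E₀ - V x)
        = (E₀ - V x) ^ ((-(1/4):ℝ) - 1 - 1) * (E₀ - V x) ^ (1:ℝ) by rw [Real.rpow_one],
      ← Real.rpow_add hP]; norm_num
  have hss : Real.sqrt (E₀ - V x) * Real.sqrt (E₀ - V x) = E₀ - V x := Real.mul_self_sqrt hP.le
  unfold wkbV wkbA2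
  push_cast
  set F := Complex.exp (σ * (wkbPhase V E₀ x) / h) with hF
  set S := ((Real.sqrt (E₀ - V x) : ℝ) : ℂ) with hS
  set A : ℂ := (((E₀ - V x) ^ (-(1/4):ℝ) : ℝ) : ℂ) with hA
  set A1 : ℂ := (((E₀ - V x) ^ ((-(1/4):ℝ) - 1) : ℝ) : ℂ) with hA1
  set A2 : ℂ := (((E₀ - V x) ^ ((-(1/4):ℝ) - 1 - 1) : ℝ) : ℂ) with hA2
  have hSS : S * S = (E₀ : ℂ) - (V x : ℂ) := by
    rw [hS, ← Complex.ofReal_mul, hss]; push_cast; ring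
  have e1 : A = A1 * (S * S) := by
    rw [hSS, hA, hA1, hP1]; push_cast; ring
  have e2 : A1 = A2 * (S * S) := by
    rw [hSS, hA1, hA2, hP2]; push_cast; ring
  have hh' : (h:ℂ) ≠ 0 := by exact_mod_cast hh
  have hS0 : S ≠ 0 := by
    rw [hS]; exact_mod_cast Complex.ofReal_ne_zero.mpr (ne_of_gt (Real.sqrt_pos.mpr hP))
  clear_value F S A A1 A2
  have hS1 : S * S⁻¹ = 1 := mul_inv_cancel₀ hS0
  have hh4 : (h:ℂ)^4 * ((h:ℂ)⁻¹)^4 = 1 := by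
    rw [← mul_pow, mul_inv_cancel₀ hh']; norm_num
  field_simp
  linear_combination (16*σ*(h:ℂ)*((deriv V x : ℝ):ℂ)*F) * e1 + (-32*S^3*A*F) * hσ
    + (32*S*A*F) * hSS

lemma wkb_wronskian (V : ℝ → ℝ) {h E₀ : ℝ} (hh : h ≠ 0) {x : ℝ} (hx : V x < E₀) :
    wkbV V h E₀ Complex.I x * ((h:ℂ) * wkbD1 V h E₀ (-Complex.I) x)
      - wkbV V h E₀ (-Complex.I) x * ((h:ℂ) * wkbD1 V h E₀ Complex.I x)
      = -2 * Complex.I := by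
  have hP : (0:ℝ) < E₀ - V x := by linarith
  have hh' : (h:ℂ) ≠ 0 := by exact_mod_cast hh
  have hhc : (h:ℂ) * (h:ℂ)⁻¹ = 1 := mul_inv_cancel₀ hh'
  unfold wkbV wkbD1
  set Ep := Complex.exp (Complex.I * (wkbPhase V E₀ x) / h) with hEp
  set Em := Complex.exp (-Complex.I * (wkbPhase V E₀ x) / h) with hEm
  set S := ((Real.sqrt (E₀ - V x) : ℝ) : ℂ) with hS
  set A : ℂ := (((E₀ - V x) ^ (-(1/4):ℝ) : ℝ) : ℂ) with hA
  have hEE : Ep * Em = 1 := by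
    rw [hEp, hEm, ← Complex.exp_add, show Complex.I * (wkbPhase V E₀ x) / h
      + -Complex.I * (wkbPhase V E₀ x) / h = 0 by ring, Complex.exp_zero]
  have hASS : A * A * S = 1 := by
    rw [hA, hS, ← Complex.ofReal_mul, ← Complex.ofReal_mul]
    exact_mod_cast congrArg (Complex.ofReal) (a_sq_sqrt hP)
  clear_value Ep Em S A
  push_cast
  linear_combination (-2*Complex.I*A*A*S*Ep*Em) * hhc + (-2*Complex.I*A*A*S) * hEE
    + (-2*Complex.I) * hASS
lemma exp_small {h : ℝ} (h0 : 0 < h) (h1 : h < 1/400) : Real.exp (-1/(10*h)) ≤ h := by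
  have ht : 0 < 1/(20*h) := by positivity
  have h3 : 1/(20*h) + 1 ≤ Real.exp (1/(20*h)) := Real.add_one_le_exp _
  have h2 : Real.exp (1/(10*h)) = Real.exp (1/(20*h)) * Real.exp (1/(20*h)) := by
    rw [← Real.exp_add]; congr 1; field_simp; ring
  have hu : (1/(20*h))^2 = 1/(400*h^2) := by field_simp; ring
  have h4 : 1/(400*h^2) ≤ Real.exp (1/(10*h)) := by
    rw [h2, ← hu]
    have := mul_le_mul h3 h3 (by positivity) (Real.exp_pos _).le
    nlinarith [ht]
  have h5 : Real.exp (-1/(10*h)) ≤ 400*h^2 := by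
    rw [show (-1/(10*h)) = -(1/(10*h)) by ring, Real.exp_neg]
    have h6 : (Real.exp (1/(10*h)))⁻¹ ≤ (1/(400*h^2))⁻¹ :=
      inv_anti₀ (by positivity) h4
    simpa [one_div] using h6
  nlinarith [h5, mul_pos h0 h0]


lemma norm_exp_unit (σ : ℂ) (hσ : σ = Complex.I ∨ σ = -Complex.I) (r h : ℝ) :
    ‖Complex.exp (σ * (r:ℂ) / (h:ℂ))‖ = 1 := by
  rcases hσ with rfl | rfl
  · rw [show Complex.I * (r:ℂ)/(h:ℂ) = ((r/h : ℝ):ℂ) * Complex.I by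
      rw [Complex.ofReal_div]; ring]
    rw [Complex.norm_exp_ofReal_mul_I]
  · rw [show -Complex.I * (r:ℂ)/(h:ℂ) = ((-(r/h) : ℝ):ℂ) * Complex.I by
      rw [Complex.ofReal_neg, Complex.ofReal_div]; ring]
    rw [Complex.norm_exp_ofReal_mul_I]

set_option maxHeartbeats 2000000 in
/-- On `[3.5, R+1]` the WKB functions `v_±` solve `(P - E₀) v_± = O(h²)`
and their semiclassical Wronskian satisfies `W(v₊, v₋) = -2i + O(h)`. -/
theorem wkb_solutions_estimates
    (V : ℝ → ℝ)
    (hV_smooth : ContDiff ℝ (⊤ : ℕ∞) V) (hV_comp : HasCompactSupport V)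
    (hV_nonneg : ∀ x, 0 ≤ V x) (hV_even : ∀ x, V (-x) = V x)
    (hV_inner : ∀ x ∈ Set.Icc (-1 : ℝ) 1, V x = x ^ 2 + 1)
    (hV_slope : ∀ x ∈ Set.Icc (2 : ℝ) 3.5, V x = 4 - x)
    (hV_lt : ∀ x : ℝ, 3 < x → V x < 1)
    (hV_supp : tsupport V ⊆ Set.Icc (-5 : ℝ) 5)
    (R : ℝ) (hR : 5 < R) :
    ∃ C > (0 : ℝ), ∃ h₀ > (0 : ℝ), ∀ h : ℝ, 0 < h → h < h₀ →
      ∀ E₀ : ℝ, |E₀ - (1 + h)| ≤ Real.exp (-1 / (10 * h)) →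
      ∀ x ∈ Set.Icc (3.5 : ℝ) (R + 1),
        ‖-(h : ℂ) ^ 2 * deriv (deriv (wkbPlus V h E₀)) x
            + ((V x - E₀ : ℝ) : ℂ) * wkbPlus V h E₀ x‖ ≤ C * h ^ 2 ∧
        ‖-(h : ℂ) ^ 2 * deriv (deriv (wkbMinus V h E₀)) x
            + ((V x - E₀ : ℝ) : ℂ) * wkbMinus V h E₀ x‖ ≤ C * h ^ 2 ∧
        ‖(wkbPlus V h E₀ x * ((h : ℂ) * deriv (wkbMinus V h E₀) x)
            - wkbMinus V h E₀ x * ((h : ℂ) * deriv (wkbPlus V h E₀) x))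
            + 2 * Complex.I‖ ≤ C * h := by
  -- compactness bounds
  have hKne : (3.5:ℝ) ∈ Icc (3.5:ℝ) (R+1) := left_mem_Icc.mpr (by linarith)
  obtain ⟨x₀, hx₀, hmax⟩ := isCompact_Icc.exists_isMaxOn ⟨3.5, hKne⟩
    (hV_smooth.continuous.continuousOn (s := Icc (3.5:ℝ) (R+1)))
  have hM : V x₀ < 1 := hV_lt x₀ (by have := hx₀.1; linarith)
  set δ : ℝ := 1 - V x₀ with hδdef
  have hδpos : 0 < δ := by simp [hδdef]; linarith
  have hD1 := contDiff_infty_iff_deriv.mp hV_smooth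
  have hD2 := contDiff_infty_iff_deriv.mp hD1.2
  obtain ⟨K1, hK1⟩ := isCompact_Icc.exists_bound_of_continuousOn
    (hD1.2.continuous.continuousOn (s := Icc (3.5:ℝ) (R+1)))
  obtain ⟨K2, hK2⟩ := isCompact_Icc.exists_bound_of_continuousOn
    (hD2.2.continuous.continuousOn (s := Icc (3.5:ℝ) (R+1)))
  have hK1nn : 0 ≤ K1 := le_trans (norm_nonneg _) (hK1 3.5 hKne)
  have hK2nn : 0 ≤ K2 := le_trans (norm_nonneg _) (hK2 3.5 hKne)
  set B : ℝ := K2 * (1/4) * δ ^ ((-(1/4):ℝ)-1) + K1^2 * (5/16) * δ ^ ((-(1/4):ℝ)-1-1)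
    with hBdef
  have hBnn : 0 ≤ B := by
    apply add_nonneg
    · exact mul_nonneg (mul_nonneg hK2nn (by norm_num)) (Real.rpow_pos_of_pos hδpos _).le
    · exact mul_nonneg (mul_nonneg (sq_nonneg _) (by norm_num))
        (Real.rpow_pos_of_pos hδpos _).le
  refine ⟨B + 1, by linarith, 1/400, by norm_num, ?_⟩
  intro h hh0 hh1 E₀ hE₀ x hxK
  have hh : h ≠ 0 := ne_of_gt hh0
  have hh' : (h:ℂ) ≠ 0 := by exact_mod_cast hh
  have hexp : Real.exp (-1/(10*h)) ≤ h := exp_small hh0 hh1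
  have hE1 : 1 ≤ E₀ := by
    have := abs_le.mp hE₀
    linarith [this.1]
  have hlt : ∀ y, 3 < y → V y < E₀ := fun y hy => lt_of_lt_of_le (hV_lt y hy) hE1
  have hx3 : 3 < x := by have := hxK.1; linarith
  have hVx : V x < E₀ := hlt x hx3
  have hPx : δ ≤ E₀ - V x := by
    have hvv : V x ≤ V x₀ := hmax hxK
    simp only [hδdef]
    linarith
  have hPpos : 0 < E₀ - V x := lt_of_lt_of_le hδpos hPx
  -- a2 bound
  have e1p : 0 < (E₀ - V x) ^ ((-(1/4):ℝ)-1) := Real.rpow_pos_of_pos hPpos _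
  have e2p : 0 < (E₀ - V x) ^ ((-(1/4):ℝ)-1-1) := Real.rpow_pos_of_pos hPpos _
  have hQ1 : (E₀ - V x) ^ ((-(1/4):ℝ)-1) ≤ δ ^ ((-(1/4):ℝ)-1) :=
    Real.rpow_le_rpow_of_nonpos hδpos hPx (by norm_num)
  have hQ2 : (E₀ - V x) ^ ((-(1/4):ℝ)-1-1) ≤ δ ^ ((-(1/4):ℝ)-1-1) :=
    Real.rpow_le_rpow_of_nonpos hδpos hPx (by norm_num)
  have hw1 : |deriv V x| ≤ K1 := by
    have := hK1 x hxK; rwa [Real.norm_eq_abs] at this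
  have hw2 : |deriv (deriv V) x| ≤ K2 := by
    have := hK2 x hxK; rwa [Real.norm_eq_abs] at this
  have habs : |wkbA2 V E₀ x| ≤ B := by
    unfold wkbA2
    have t1 : |(-(deriv (deriv V) x)) * (-(1/4)) * (E₀ - V x) ^ ((-(1/4):ℝ) - 1)|
        ≤ K2 * (1/4) * δ ^ ((-(1/4):ℝ)-1) := by
      rw [show (-(deriv (deriv V) x)) * (-(1/4)) * (E₀ - V x) ^ ((-(1/4):ℝ) - 1)
          = deriv (deriv V) x * ((1/4) * (E₀ - V x) ^ ((-(1/4):ℝ) - 1)) by ring,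
        abs_mul, abs_of_pos (show (0:ℝ) < (1/4) * (E₀ - V x) ^ ((-(1/4):ℝ) - 1) by positivity)]
      nlinarith [mul_le_mul hw2 hQ1 e1p.le hK2nn]
    have t2 : |(-(deriv V x)) * (-(1/4)) * ((-(deriv V x)) * ((-(1/4):ℝ) - 1)
          * (E₀ - V x) ^ ((-(1/4):ℝ) - 1 - 1))|
        ≤ K1^2 * (5/16) * δ ^ ((-(1/4):ℝ)-1-1) := by
      rw [show (-(deriv V x)) * (-(1/4)) * ((-(deriv V x)) * ((-(1/4):ℝ) - 1)
          * (E₀ - V x) ^ ((-(1/4):ℝ) - 1 - 1))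
          = (deriv V x * deriv V x) * ((5/16) * (E₀ - V x) ^ ((-(1/4):ℝ) - 1 - 1)) by ring,
        abs_mul, abs_mul_self,
        abs_of_pos (show (0:ℝ) < (5/16) * (E₀ - V x) ^ ((-(1/4):ℝ) - 1 - 1) by positivity)]
      have hsq : deriv V x * deriv V x ≤ K1^2 := by
        have := mul_le_mul hw1 hw1 (abs_nonneg _) hK1nn
        nlinarith [abs_mul_abs_self (deriv V x)]
      nlinarith [mul_le_mul hsq hQ2 e2p.le (by positivity : (0:ℝ) ≤ K1^2), sq_nonneg K1]
    calc |_ + _| ≤ _ := abs_add_le _ _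
      _ ≤ B := by rw [hBdef]; exact add_le_add t1 t2
  -- derivative identities
  have hP : wkbPlus V h E₀ = wkbV V h E₀ Complex.I := rfl
  have hMn : wkbMinus V h E₀ = wkbV V h E₀ (-Complex.I) := rfl
  have hσP : Complex.I * Complex.I = -1 := Complex.I_mul_I
  have hσM : (-Complex.I) * (-Complex.I) = -1 := by
    rw [neg_mul_neg, Complex.I_mul_I]
  obtain ⟨dP, hdP, hidP⟩ := hasDerivAt_wkbD1 V hV_smooth hh Complex.I hσP hVx
  obtain ⟨dM, hdM, hidM⟩ := hasDerivAt_wkbD1 V hV_smooth hh (-Complex.I) hσM hVx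
  have hEvP : deriv (wkbPlus V h E₀) =ᶠ[nhds x] wkbD1 V h E₀ Complex.I :=
    Filter.eventuallyEq_of_mem (Ioi_mem_nhds hx3)
      (fun y hy => (hasDerivAt_wkbV V hV_smooth Complex.I (hlt y hy)).deriv)
  have hEvM : deriv (wkbMinus V h E₀) =ᶠ[nhds x] wkbD1 V h E₀ (-Complex.I) :=
    Filter.eventuallyEq_of_mem (Ioi_mem_nhds hx3)
      (fun y hy => (hasDerivAt_wkbV V hV_smooth (-Complex.I) (hlt y hy)).deriv)
  have hddP : deriv (deriv (wkbPlus V h E₀)) x = dP := by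
    rw [hEvP.deriv_eq]; exact hdP.deriv
  have hddM : deriv (deriv (wkbMinus V h E₀)) x = dM := by
    rw [hEvM.deriv_eq]; exact hdM.deriv
  -- norm computation
  have hnorm : ∀ σ : ℂ, σ = Complex.I ∨ σ = -Complex.I →
      ‖-(h:ℂ)^2 * ((wkbA2 V E₀ x : ℝ):ℂ) * Complex.exp (σ * (wkbPhase V E₀ x) / h)‖
        = h^2 * |wkbA2 V E₀ x| := by
    intro σ hσ
    rw [norm_mul, norm_mul, norm_neg, norm_pow, Complex.norm_real, Real.norm_eq_abs,
      Complex.norm_real, Real.norm_eq_abs, norm_exp_unit σ hσ, abs_of_pos hh0]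
    ring
  have hbound : ∀ σ : ℂ, σ = Complex.I ∨ σ = -Complex.I →
      ‖-(h:ℂ)^2 * ((wkbA2 V E₀ x : ℝ):ℂ) * Complex.exp (σ * (wkbPhase V E₀ x) / h)‖
        ≤ (B+1) * h^2 := by
    intro σ hσ
    rw [hnorm σ hσ]
    have : h^2 * |wkbA2 V E₀ x| ≤ h^2 * (B+1) :=
      mul_le_mul_of_nonneg_left (by linarith) (sq_nonneg h)
    linarith
  refine ⟨?_, ?_, ?_⟩
  · rw [hddP, hP, hidP]
    exact hbound Complex.I (Or.inl rfl)
  · rw [hddM, hMn, hidM]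
    exact hbound (-Complex.I) (Or.inr rfl)
  · have hdPx : deriv (wkbPlus V h E₀) x = wkbD1 V h E₀ Complex.I x :=
      (hasDerivAt_wkbV V hV_smooth Complex.I hVx).deriv
    have hdMx : deriv (wkbMinus V h E₀) x = wkbD1 V h E₀ (-Complex.I) x :=
      (hasDerivAt_wkbV V hV_smooth (-Complex.I) hVx).deriv
    rw [hdPx, hdMx, hP, hMn, wkb_wronskian V hh hVx]
    simp only [neg_mul, neg_add_cancel, norm_zero]
    positivity
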